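/- arXiv:2510.17669 — 6 statements merged into one kernel-verified Lean document; each statement's English description precedes it below -/
import Mathlib

section
/- Let N ≥ 3 be an integer, let 𝔞, 𝔡 > 0 and 𝔟 ∈ ℝ. Then for every z > 0, 𝔡 z^N − 𝔟 z + 𝔞 z^{-(N-1)} ≥ − 𝔟² (N+1)^{(N+1)/(2N−1)} (N−2)^{(N−2)/(2N−1)} / (4 (2N−1) 𝔡^{(N+1)/(2N−1)} 𝔞^{(N−2)/(2N−1)}). -/
theorem stmt_5 (N : ℕ) (hN : 3 ≤ N) (a b d : ℝ) (ha : 0 < a) (hd : 0 < d)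
    (z : ℝ) (hz : 0 < z) :
    d * z ^ (N : ℝ) - b * z + a * z ^ (-((N : ℝ) - 1)) ≥
      -(b ^ 2 * ((N : ℝ) + 1) ^ (((N : ℝ) + 1) / (2 * (N : ℝ) - 1)) *
          ((N : ℝ) - 2) ^ (((N : ℝ) - 2) / (2 * (N : ℝ) - 1))) /
        (4 * (2 * (N : ℝ) - 1) * d ^ (((N : ℝ) + 1) / (2 * (N : ℝ) - 1)) *
          a ^ (((N : ℝ) - 2) / (2 * (N : ℝ) - 1))) := by
  have hn : (3:ℝ) ≤ (N:ℝ) := by exact_mod_cast hN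
  set n : ℝ := (N:ℝ) with hn_def
  have hD : (0:ℝ) < 2 * n - 1 := by linarith
  set α : ℝ := (n + 1) / (2 * n - 1) with hα
  set β : ℝ := (n - 2) / (2 * n - 1) with hβ
  have hα0 : 0 < α := div_pos (by linarith) hD
  have hβ0 : 0 < β := div_pos (by linarith) hD
  have hαβ : α + β = 1 := by
    rw [hα, hβ, ← add_div, div_eq_one_iff_eq hD.ne']
    ring
  set M : ℝ := (d / α) ^ α * (a / β) ^ β with hM_def
  have hM : 0 < M :=
    mul_pos (Real.rpow_pos_of_pos (div_pos hd hα0) _)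
      (Real.rpow_pos_of_pos (div_pos ha hβ0) _)
  -- weighted AM-GM
  have hp1 : (0:ℝ) ≤ d * z ^ n / α :=
    le_of_lt (div_pos (mul_pos hd (Real.rpow_pos_of_pos hz _)) hα0)
  have hp2 : (0:ℝ) ≤ a * z ^ (-(n - 1)) / β :=
    le_of_lt (div_pos (mul_pos ha (Real.rpow_pos_of_pos hz _)) hβ0)
  have hAM := Real.geom_mean_le_arith_mean2_weighted hα0.le hβ0.le hp1 hp2 hαβ
  have hgm : (d * z ^ n / α) ^ α * (a * z ^ (-(n - 1)) / β) ^ β = M * z ^ (2:ℝ) := by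
    have h1 : d * z ^ n / α = (d / α) * z ^ n := by ring
    have h2 : a * z ^ (-(n - 1)) / β = (a / β) * z ^ (-(n - 1)) := by ring
    rw [h1, h2, Real.mul_rpow (div_pos hd hα0).le (Real.rpow_pos_of_pos hz _).le,
      Real.mul_rpow (div_pos ha hβ0).le (Real.rpow_pos_of_pos hz _).le,
      ← Real.rpow_mul hz.le, ← Real.rpow_mul hz.le,
      mul_mul_mul_comm, ← Real.rpow_add hz, ← hM_def]
    congr 1
    have he : n * α + -(n - 1) * β = 2 := by
      rw [hα, hβ, mul_div_assoc', mul_div_assoc', ← add_div, div_eq_iff hD.ne']; ring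
    rw [he]
  have h1 : M * (z * z) ≤ d * z ^ n + a * z ^ (-(n - 1)) := by
    rw [hgm] at hAM
    have hz2 : z ^ (2:ℝ) = z * z := by
      rw [show (2:ℝ) = ((2:ℕ):ℝ) by norm_num, Real.rpow_natCast]; ring
    rw [hz2] at hAM
    calc M * (z * z) ≤ α * (d * z ^ n / α) + β * (a * z ^ (-(n - 1)) / β) := hAM
      _ = d * z ^ n + a * z ^ (-(n - 1)) := by field_simp
  -- main lower bound
  have key : -(b ^ 2 / (4 * M)) ≤ d * z ^ n - b * z + a * z ^ (-(n - 1)) := by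
    rw [← neg_div, div_le_iff₀ (by positivity)]
    nlinarith [sq_nonneg (2 * M * z - b),
      mul_le_mul_of_nonneg_left h1 (by positivity : (0:ℝ) ≤ 4 * M)]
  -- identify the constant
  have hMval : M * ((n + 1) ^ α * (n - 2) ^ β) = d ^ α * a ^ β * (2 * n - 1) := by
    have e1 : (d / α) ^ α = d ^ α * (2 * n - 1) ^ α / (n + 1) ^ α := by
      rw [hα, div_div_eq_mul_div, Real.div_rpow (by positivity) (by linarith),
        Real.mul_rpow hd.le hD.le]
    have e2 : (a / β) ^ β = a ^ β * (2 * n - 1) ^ β / (n - 2) ^ β := by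
      rw [hβ, div_div_eq_mul_div, Real.div_rpow (by positivity) (by linarith),
        Real.mul_rpow ha.le hD.le]
    have e3 : (2 * n - 1) ^ α * (2 * n - 1) ^ β = 2 * n - 1 := by
      rw [← Real.rpow_add hD, hαβ, Real.rpow_one]
    have hn1 : (0:ℝ) < (n + 1) ^ α := Real.rpow_pos_of_pos (by linarith) _
    have hn2 : (0:ℝ) < (n - 2) ^ β := Real.rpow_pos_of_pos (by linarith) _
    rw [hM_def, e1, e2]
    field_simp
    linear_combination e3
  have hrhs : -(b ^ 2 * (n + 1) ^ α * (n - 2) ^ β) /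
      (4 * (2 * n - 1) * d ^ α * a ^ β) = -(b ^ 2 / (4 * M)) := by
    have hn1 : (0:ℝ) < (n + 1) ^ α := Real.rpow_pos_of_pos (by linarith) _
    have hn2 : (0:ℝ) < (n - 2) ^ β := Real.rpow_pos_of_pos (by linarith) _
    have hdα : (0:ℝ) < d ^ α := Real.rpow_pos_of_pos hd _
    have haβ : (0:ℝ) < a ^ β := Real.rpow_pos_of_pos ha _
    rw [show -(b ^ 2 / (4 * M)) = -b ^ 2 / (4 * M) from (neg_div _ _).symm,
      div_eq_div_iff (by positivity) (by positivity)]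
    linear_combination (-4 * b ^ 2) * hMval
  rw [ge_iff_le, hrhs]
  exact key
end

section
/- For all positive real numbers x and y with x ≠ y, one has x^{x/(x+y)} · y^{y/(x+y)} < x + y. -/
theorem stmt_9 (x y : ℝ) (hx : 0 < x) (hy : 0 < y) (hxy : x ≠ y) :
    x ^ (x / (x + y)) * y ^ (y / (x + y)) < x + y := by
  have hs : 0 < x + y := by linarith
  have h1 : x ^ (x / (x + y)) * y ^ (y / (x + y)) ≤
      (x / (x + y)) * x + (y / (x + y)) * y := by
    apply Real.geom_mean_le_arith_mean2_weighted
    · positivity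
    · positivity
    · exact hx.le
    · exact hy.le
    · field_simp
  have h2 : (x / (x + y)) * x + (y / (x + y)) * y < x + y := by
    rw [div_mul_eq_mul_div, div_mul_eq_mul_div, ← add_div, div_lt_iff₀ hs]
    nlinarith [mul_pos hx hy]
  linarith
end

section
/- Let N ≥ 3 be an integer, let 𝔞, 𝔡 > 0 and 𝔟 ∈ ℝ. Then for every z > 0, 𝔡 z^N − 𝔟 z + 𝔞 z^{-(N-1)} > (2N−1) / (2 (N−1)^{(N−1)/(2N−1)} N^{N/(2N−1)}) · (𝔡^{2N/(2N−1)} 𝔞^{(2N−2)/(2N−1)} − 𝔟²) / (𝔡^{(N+1)/(2N−1)} 𝔞^{(N−2)/(2N−1)}). -/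
set_option maxHeartbeats 1000000

open Real

lemma amgm2 {w₁ w₂ X Y : ℝ} (h1 : 0 < w₁) (h2 : 0 < w₂) (hw : w₁ + w₂ = 1)
    (hX : 0 ≤ X) (hY : 0 ≤ Y) :
    X ^ w₁ * Y ^ w₂ ≤ (w₁ ^ w₁ * w₂ ^ w₂) * (X + Y) := by
  have h := Real.geom_mean_le_arith_mean2_weighted h1.le h2.le
    (div_nonneg hX h1.le) (div_nonneg hY h2.le) hw
  rw [Real.div_rpow hX h1.le, Real.div_rpow hY h2.le] at h
  have e1 : w₁ * (X / w₁) = X := by field_simp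
  have e2 : w₂ * (Y / w₂) = Y := by field_simp
  rw [e1, e2] at h
  have hp1 : (0:ℝ) < w₁ ^ w₁ := rpow_pos_of_pos h1 _
  have hp2 : (0:ℝ) < w₂ ^ w₂ := rpow_pos_of_pos h2 _
  calc X ^ w₁ * Y ^ w₂
      = (w₁ ^ w₁ * w₂ ^ w₂) * (X ^ w₁ / w₁ ^ w₁ * (Y ^ w₂ / w₂ ^ w₂)) := by
        field_simp
    _ ≤ (w₁ ^ w₁ * w₂ ^ w₂) * (X + Y) :=
        mul_le_mul_of_nonneg_left h (by positivity)

theorem stmt_11 (N : ℕ) (hN : 3 ≤ N) (a b d : ℝ) (ha : 0 < a) (hd : 0 < d)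
    (z : ℝ) (hz : 0 < z) :
    d * z ^ (N : ℝ) - b * z + a * z ^ (-((N : ℝ) - 1)) >
      (2 * (N : ℝ) - 1) /
          (2 * ((N : ℝ) - 1) ^ (((N : ℝ) - 1) / (2 * (N : ℝ) - 1)) *
            (N : ℝ) ^ ((N : ℝ) / (2 * (N : ℝ) - 1))) *
        ((d ^ (2 * (N : ℝ) / (2 * (N : ℝ) - 1)) *
            a ^ ((2 * (N : ℝ) - 2) / (2 * (N : ℝ) - 1)) - b ^ 2) /
          (d ^ (((N : ℝ) + 1) / (2 * (N : ℝ) - 1)) *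
            a ^ (((N : ℝ) - 2) / (2 * (N : ℝ) - 1)))) := by
  have hn : (3:ℝ) ≤ (N:ℝ) := by exact_mod_cast hN
  set n : ℝ := (N:ℝ) with hndef
  have hs : (0:ℝ) < 2 * n - 1 := by linarith
  set s : ℝ := 2 * n - 1 with hsdef
  -- weights
  have hw1 : (0:ℝ) < (n-1)/s := div_pos (by linarith) hs
  have hw2 : (0:ℝ) < n/s := div_pos (by linarith) hs
  have hα : (0:ℝ) < (n+1)/s := div_pos (by linarith) hs
  have hβ : (0:ℝ) < (n-2)/s := div_pos (by linarith) hs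
  have hww : (n-1)/s + n/s = 1 := by field_simp; ring
  have hαβ : (n+1)/s + (n-2)/s = 1 := by field_simp; ring
  set P : ℝ := (n-1) ^ ((n-1)/s) * n ^ (n/s) with hPdef
  set Q : ℝ := (n+1) ^ ((n+1)/s) * (n-2) ^ ((n-2)/s) with hQdef
  set M : ℝ := d ^ ((n-1)/s) * a ^ (n/s) with hMdef
  set E : ℝ := d ^ ((n+1)/s) * a ^ ((n-2)/s) with hEdef
  have hP : 0 < P := by
    apply mul_pos <;> apply rpow_pos_of_pos <;> linarith
  have hQ : 0 < Q := by
    apply mul_pos <;> apply rpow_pos_of_pos <;> linarith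
  have hM : 0 < M := mul_pos (rpow_pos_of_pos hd _) (rpow_pos_of_pos ha _)
  have hE : 0 < E := mul_pos (rpow_pos_of_pos hd _) (rpow_pos_of_pos ha _)
  set X : ℝ := d * z ^ n with hXdef
  set Y : ℝ := a * z ^ (-(n-1)) with hYdef
  have hXpos : 0 < X := mul_pos hd (rpow_pos_of_pos hz _)
  have hYpos : 0 < Y := mul_pos ha (rpow_pos_of_pos hz _)
  -- P and Q upper bounds
  have hPle : P ≤ ((n-1)^2 + n^2)/s := by
    have h := Real.geom_mean_le_arith_mean2_weighted hw1.le hw2.le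
      (by linarith : (0:ℝ) ≤ n - 1) (by linarith : (0:ℝ) ≤ n) hww
    calc P ≤ (n-1)/s * (n-1) + n/s * n := h
      _ = ((n-1)^2 + n^2)/s := by field_simp
  have hQle : Q ≤ ((n+1)^2 + (n-2)^2)/s := by
    have h := Real.geom_mean_le_arith_mean2_weighted hα.le hβ.le
      (by linarith : (0:ℝ) ≤ n + 1) (by linarith : (0:ℝ) ≤ n - 2) hαβ
    calc Q ≤ (n+1)/s * (n+1) + (n-2)/s * (n-2) := h
      _ = ((n+1)^2 + (n-2)^2)/s := by field_simp
  have hQP : Q * P < s^2 := by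
    have hkey : ((n+1)^2 + (n-2)^2) * ((n-1)^2 + n^2) < (2*n-1)^4 := by nlinarith
    calc Q * P ≤ ((n+1)^2 + (n-2)^2)/s * (((n-1)^2 + n^2)/s) := by
          apply mul_le_mul hQle hPle hP.le
          positivity
      _ < s^2 := by
          rw [div_mul_div_comm, div_lt_iff₀ (by positivity)]
          calc ((n+1)^2 + (n-2)^2) * ((n-1)^2 + n^2) < (2*n-1)^4 := hkey
            _ = s^2 * (s*s) := by rw [hsdef]; ring
  -- the two AM-GM lower bounds on X + Y
  have eXw : ∀ w : ℝ, X ^ w = d ^ w * z ^ (n*w) := by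
    intro w
    rw [hXdef, Real.mul_rpow hd.le (rpow_pos_of_pos hz _).le, ← Real.rpow_mul hz.le]
  have eYw : ∀ w : ℝ, Y ^ w = a ^ w * z ^ (-(n-1)*w) := by
    intro w
    rw [hYdef, Real.mul_rpow ha.le (rpow_pos_of_pos hz _).le, ← Real.rpow_mul hz.le]
  have hsne : s ≠ 0 := ne_of_gt hs
  have eM : X ^ ((n-1)/s) * Y ^ (n/s) = M := by
    rw [eXw, eYw, hMdef]
    have : z ^ (n*((n-1)/s)) * z ^ (-(n-1)*(n/s)) = 1 := by
      rw [← Real.rpow_add hz]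
      have : n*((n-1)/s) + -(n-1)*(n/s) = 0 := by field_simp; ring
      rw [this, Real.rpow_zero]
    calc d ^ ((n-1)/s) * z ^ (n*((n-1)/s)) * (a ^ (n/s) * z ^ (-(n-1)*(n/s)))
        = d ^ ((n-1)/s) * a ^ (n/s) * (z ^ (n*((n-1)/s)) * z ^ (-(n-1)*(n/s))) := by ring
      _ = d ^ ((n-1)/s) * a ^ (n/s) := by rw [this, mul_one]
  have eE : X ^ ((n+1)/s) * Y ^ ((n-2)/s) = E * (z*z) := by
    rw [eXw, eYw, hEdef]
    have hzz : z ^ (n*((n+1)/s)) * z ^ (-(n-1)*((n-2)/s)) = z * z := by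
      rw [← Real.rpow_add hz]
      have e2 : n*((n+1)/s) + -(n-1)*((n-2)/s) = 2 := by field_simp; ring
      rw [e2, show (2:ℝ) = ((2:ℕ):ℝ) by norm_num, Real.rpow_natCast]
      ring
    calc d ^ ((n+1)/s) * z ^ (n*((n+1)/s)) * (a ^ ((n-2)/s) * z ^ (-(n-1)*((n-2)/s)))
        = d ^ ((n+1)/s) * a ^ ((n-2)/s) * (z ^ (n*((n+1)/s)) * z ^ (-(n-1)*((n-2)/s))) := by
          ring
      _ = d ^ ((n+1)/s) * a ^ ((n-2)/s) * (z*z) := by rw [hzz]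
  have eden1 : ((n-1)/s) ^ ((n-1)/s) * (n/s) ^ (n/s) = P/s := by
    rw [Real.div_rpow (by linarith) hs.le, Real.div_rpow (by linarith) hs.le, hPdef]
    rw [div_mul_div_comm, ← Real.rpow_add hs, hww, Real.rpow_one]
  have eden2 : ((n+1)/s) ^ ((n+1)/s) * ((n-2)/s) ^ ((n-2)/s) = Q/s := by
    rw [Real.div_rpow (by linarith) hs.le, Real.div_rpow (by linarith) hs.le, hQdef]
    rw [div_mul_div_comm, ← Real.rpow_add hs, hαβ, Real.rpow_one]
  have h1 : s * M / P ≤ X + Y := by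
    have h := amgm2 hw1 hw2 hww hXpos.le hYpos.le
    rw [eM, eden1] at h
    rw [div_le_iff₀ hP]
    calc s * M = (P/s * (X+Y)) * s - (P/s * (X+Y) - M) * s := by ring
      _ ≤ (P/s * (X+Y)) * s - 0 := by
          have : 0 ≤ P/s * (X+Y) - M := by linarith
          nlinarith
      _ = (X + Y) * P := by field_simp; ring
  have h2 : s * E / Q * (z*z) ≤ X + Y := by
    have h := amgm2 hα hβ hαβ hXpos.le hYpos.le
    rw [eE, eden2] at h
    rw [div_mul_eq_mul_div, div_le_iff₀ hQ]
    calc s * E * (z*z) = (Q/s * (X+Y)) * s - (Q/s * (X+Y) - E * (z*z)) * s := by ring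
      _ ≤ (Q/s * (X+Y)) * s - 0 := by
          have : 0 ≤ Q/s * (X+Y) - E*(z*z) := by linarith
          nlinarith
      _ = (X + Y) * Q := by field_simp; ring
  -- rewrite the RHS
  have hgoal : (2 * n - 1) / (2 * (n - 1) ^ ((n - 1) / (2 * n - 1)) * n ^ (n / (2 * n - 1))) *
        ((d ^ (2 * n / (2 * n - 1)) * a ^ ((2 * n - 2) / (2 * n - 1)) - b ^ 2) /
          (d ^ ((n + 1) / (2 * n - 1)) * a ^ ((n - 2) / (2 * n - 1))))
      = (1/2) * (s * M / P) - s / (2 * P * E) * b ^ 2 := by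
    have hD : d ^ (2 * n / s) * a ^ ((2 * n - 2) / s) = M * E := by
      rw [hMdef, hEdef]
      rw [show 2*n/s = (n-1)/s + (n+1)/s by field_simp; ring,
          show (2*n-2)/s = n/s + (n-2)/s by field_simp; ring,
          Real.rpow_add hd, Real.rpow_add ha]
      ring
    rw [← hsdef, hD,
      show 2 * (n-1) ^ ((n-1)/s) * n ^ (n/s) = 2 * P by rw [hPdef]; ring, ← hEdef]
    field_simp
  rw [hgoal]
  -- final combination
  have ht : P * Q / (2 * s^2) < 1/2 := by
    rw [div_lt_iff₀ (by positivity)]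
    nlinarith
  have ht0 : 0 < P * Q / (2 * s^2) := by positivity
  have hcomb : (1 - P*Q/(2*s^2)) * (s*M/P) + (P*Q/(2*s^2)) * (s*E/Q*(z*z)) ≤ X + Y := by
    calc (1 - P*Q/(2*s^2)) * (s*M/P) + (P*Q/(2*s^2)) * (s*E/Q*(z*z))
        ≤ (1 - P*Q/(2*s^2)) * (X+Y) + (P*Q/(2*s^2)) * (X+Y) := by
          apply add_le_add
          · exact mul_le_mul_of_nonneg_left h1 (by linarith)
          · exact mul_le_mul_of_nonneg_left h2 ht0.le
      _ = X + Y := by ring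
  have hquad : 0 ≤ (P*Q/(2*s^2)) * (s*E/Q*(z*z)) - b*z + s/(2*P*E)*b^2 := by
    have e : (P*Q/(2*s^2)) * (s*E/Q*(z*z)) - b*z + s/(2*P*E)*b^2
        = (P*E*z - s*b)^2 / (2*s*P*E) := by
      field_simp
      ring
    rw [e]
    positivity
  have hMP : 0 < s*M/P := by positivity
  have hstrict : (1/2) * (s*M/P) < (1 - P*Q/(2*s^2)) * (s*M/P) := by
    apply mul_lt_mul_of_pos_right _ hMP
    linarith
  linarith [hcomb, hquad, hstrict]
end

section
/- For every integer N ≥ 3, one has (2N−1) / (2 (N−1)^{(N−1)/(2N−1)} N^{N/(2N−1)}) > 2^{1/(N−1)} (N−1) / N^{N/(N−1)}. -/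
theorem stmt_13 (N : ℕ) (hN : 3 ≤ N) :
    (2 * (N : ℝ) - 1) /
        (2 * ((N : ℝ) - 1) ^ (((N : ℝ) - 1) / (2 * (N : ℝ) - 1)) *
          (N : ℝ) ^ ((N : ℝ) / (2 * (N : ℝ) - 1))) >
      (2 : ℝ) ^ (1 / ((N : ℝ) - 1)) * ((N : ℝ) - 1) /
        (N : ℝ) ^ ((N : ℝ) / ((N : ℝ) - 1)) := by
  set x : ℝ := (N : ℝ) with hxdef
  have hx : (3 : ℝ) ≤ x := by rw [hxdef]; exact_mod_cast hN
  have hx1 : (0 : ℝ) < x - 1 := by linarith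
  have hx2 : (0 : ℝ) < 2 * x - 1 := by linarith
  have hxpos : (0 : ℝ) < x := by linarith
  -- geometric mean vs arithmetic mean
  have hw : (x - 1) / (2 * x - 1) + x / (2 * x - 1) = 1 := by
    rw [← add_div, div_eq_one_iff_eq (ne_of_gt hx2)]
    ring
  have hGM : (x - 1) ^ ((x - 1) / (2 * x - 1)) * x ^ (x / (2 * x - 1)) ≤
      ((x - 1) ^ 2 + x ^ 2) / (2 * x - 1) := by
    have := Real.geom_mean_le_arith_mean2_weighted
      (w₁ := (x - 1) / (2 * x - 1)) (w₂ := x / (2 * x - 1))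
      (p₁ := x - 1) (p₂ := x)
      (by positivity) (by positivity) (by linarith) (by linarith) hw
    calc (x - 1) ^ ((x - 1) / (2 * x - 1)) * x ^ (x / (2 * x - 1)) ≤
        (x - 1) / (2 * x - 1) * (x - 1) + x / (2 * x - 1) * x := this
      _ = ((x - 1) ^ 2 + x ^ 2) / (2 * x - 1) := by field_simp
  have hGMpos : (0 : ℝ) < (x - 1) ^ ((x - 1) / (2 * x - 1)) * x ^ (x / (2 * x - 1)) := by
    positivity
  -- RHS < (x-1)/x
  have hsplit : x ^ (x / (x - 1)) = x * x ^ (1 / (x - 1)) := by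
    have h : x / (x - 1) = 1 + 1 / (x - 1) := by field_simp; ring
    rw [h, Real.rpow_add hxpos, Real.rpow_one]
  have h2x : (2 : ℝ) ^ (1 / (x - 1)) < x ^ (1 / (x - 1)) :=
    Real.rpow_lt_rpow (by norm_num) (by linarith) (by positivity)
  have hxa : (0 : ℝ) < x ^ (1 / (x - 1)) := by positivity
  have h2a : (0 : ℝ) < (2 : ℝ) ^ (1 / (x - 1)) := by positivity
  have key1 : (2 : ℝ) ^ (1 / (x - 1)) * (x - 1) / x ^ (x / (x - 1)) < (x - 1) / x := by
    rw [hsplit, div_lt_div_iff₀ (by positivity) hxpos]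
    have h1 : (2 : ℝ) ^ (1 / (x - 1)) * (x - 1) < x ^ (1 / (x - 1)) * (x - 1) := by
      nlinarith
    nlinarith [mul_pos hxa hx1]
  -- (x-1)/x < LHS
  have key2 : (x - 1) / x <
      (2 * x - 1) /
        (2 * (x - 1) ^ ((x - 1) / (2 * x - 1)) * x ^ (x / (2 * x - 1))) := by
    have hAM : (x - 1) / x < (2 * x - 1) / (2 * (((x - 1) ^ 2 + x ^ 2) / (2 * x - 1))) := by
      rw [div_lt_div_iff₀ hxpos (by positivity)]
      have h : ((x - 1) ^ 2 + x ^ 2) / (2 * x - 1) * (2 * x - 1) = (x - 1) ^ 2 + x ^ 2 :=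
        div_mul_cancel₀ _ (ne_of_gt hx2)
      nlinarith [h, hx2, mul_pos hx2 hx2, div_nonneg (by nlinarith : (0:ℝ) ≤ (x-1)^2 + x^2) (le_of_lt hx2)]
    calc (x - 1) / x < (2 * x - 1) / (2 * (((x - 1) ^ 2 + x ^ 2) / (2 * x - 1))) := hAM
      _ ≤ (2 * x - 1) /
        (2 * (x - 1) ^ ((x - 1) / (2 * x - 1)) * x ^ (x / (2 * x - 1))) := by
          rw [mul_assoc]
          gcongr (2 * x - 1) / ?_
          · exact mul_le_mul_of_nonneg_left hGM (by norm_num)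
  linarith
end

section
/- Let N ≥ 3 be an integer, let 𝔞, 𝔡 > 0 and 𝔟 > 0. Then for every z > 0, 𝔡 z^N − 𝔟 z + 𝔞 z^{-(N-1)} > (2N−1) / (2 (N−1)^{(N−1)/(2N−1)} N^{N/(2N−1)}) · (𝔡^{(N−1)/(2N−1)} 𝔞^{N/(2N−1)} − 𝔟^{N/(N−1)} / 𝔡^{1/(N−1)}). -/
set_option maxHeartbeats 1600000 in
theorem stmt_14 (N : ℕ) (hN : 3 ≤ N) (a b d : ℝ) (ha : 0 < a) (hd : 0 < d)
    (hb : 0 < b) (z : ℝ) (hz : 0 < z) :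
    d * z ^ (N : ℝ) - b * z + a * z ^ (-((N : ℝ) - 1)) >
      (2 * (N : ℝ) - 1) /
          (2 * ((N : ℝ) - 1) ^ (((N : ℝ) - 1) / (2 * (N : ℝ) - 1)) *
            (N : ℝ) ^ ((N : ℝ) / (2 * (N : ℝ) - 1))) *
        (d ^ (((N : ℝ) - 1) / (2 * (N : ℝ) - 1)) *
            a ^ ((N : ℝ) / (2 * (N : ℝ) - 1)) -
          b ^ ((N : ℝ) / ((N : ℝ) - 1)) / d ^ (1 / ((N : ℝ) - 1))) := by
  set n : ℝ := (N : ℝ) with hn_def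
  have hn : (3:ℝ) ≤ n := by rw [hn_def]; exact_mod_cast hN
  have hn1 : (0:ℝ) < n - 1 := by linarith
  have hn0 : (0:ℝ) < n := by linarith
  have h2n1 : (0:ℝ) < 2 * n - 1 := by linarith
  set α : ℝ := (n - 1) / (2 * n - 1) with hα_def
  set β : ℝ := n / (2 * n - 1) with hβ_def
  have hα : 0 < α := div_pos hn1 h2n1
  have hβ : 0 < β := div_pos hn0 h2n1
  have hαβ : α + β = 1 := by rw [hα_def, hβ_def, ← add_div, div_eq_one_iff_eq h2n1.ne']; ring
  set C : ℝ := (2 * n - 1) / (2 * (n - 1) ^ α * n ^ β) with hC_def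
  have hden : 0 < 2 * (n - 1) ^ α * n ^ β := by positivity
  have hC : 0 < C := div_pos h2n1 hden
  set P : ℝ := d ^ α * a ^ β with hP_def
  set Q : ℝ := b ^ (n / (n - 1)) / d ^ (1 / (n - 1)) with hQ_def
  have hP : 0 < P := by rw [hP_def]; positivity
  have hQ : 0 < Q := by rw [hQ_def]; positivity
  set K : ℝ := (n - 1) / n * (2 / n) ^ (1 / (n - 1)) with hK_def
  clear_value n α β C P Q K
  -- positivity of rpow atoms
  have hU : (0:ℝ) < (2:ℝ) ^ α := Real.rpow_pos_of_pos two_pos _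
  have hV : (0:ℝ) < (2:ℝ) ^ β := Real.rpow_pos_of_pos two_pos _
  have hW1 : (0:ℝ) < (2 * n - 1) ^ α := Real.rpow_pos_of_pos h2n1 _
  have hW2 : (0:ℝ) < (2 * n - 1) ^ β := Real.rpow_pos_of_pos h2n1 _
  have hS : (0:ℝ) < (n - 1) ^ α := Real.rpow_pos_of_pos hn1 _
  have hT : (0:ℝ) < n ^ β := Real.rpow_pos_of_pos hn0 _
  have hA : (0:ℝ) < d ^ α := Real.rpow_pos_of_pos hd _
  have hB : (0:ℝ) < a ^ β := Real.rpow_pos_of_pos ha _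
  -- multiplicative exponent facts
  have f2 : (2 * n - 1) ^ α * (2 * n - 1) ^ β = 2 * n - 1 := by
    rw [← Real.rpow_add h2n1, hαβ, Real.rpow_one]
  have f3 : (2:ℝ) ^ α * (2:ℝ) ^ β = 2 := by
    rw [← Real.rpow_add two_pos, hαβ, Real.rpow_one]
  have f1 : z ^ (n * α) * z ^ ((1 - n) * β) = 1 := by
    rw [← Real.rpow_add hz]
    have h0 : n * α + (1 - n) * β = 0 := by
      rw [hα_def, hβ_def]; field_simp; ring
    rw [h0, Real.rpow_zero]
  -- Claim 1 : weighted AM-GM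
  have key1 : (2:ℝ) ^ β * C * P ≤ d / 2 * z ^ n + a * z ^ (-(n - 1)) := by
    have hp₁ : (0:ℝ) ≤ d / 2 * z ^ n / α := by positivity
    have hp₂ : (0:ℝ) ≤ a * z ^ (-(n - 1)) / β := by positivity
    have h := Real.geom_mean_le_arith_mean2_weighted hα.le hβ.le hp₁ hp₂ hαβ
    have e1 : α * (d / 2 * z ^ n / α) = d / 2 * z ^ n := by field_simp
    have e2 : β * (a * z ^ (-(n - 1)) / β) = a * z ^ (-(n - 1)) := by field_simp
    rw [e1, e2] at h
    refine le_trans (le_of_eq ?_) h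
    have g1 : d / 2 * z ^ n / α = d * ((2 * n - 1) / (2 * (n - 1))) * z ^ n := by
      rw [hα_def]; field_simp
    have g2 : a * z ^ (-(n - 1)) / β = a * ((2 * n - 1) / n) * z ^ (-(n - 1)) := by
      rw [hβ_def]; field_simp
    rw [g1, g2,
      Real.mul_rpow (by positivity) (Real.rpow_nonneg hz.le _),
      Real.mul_rpow (by positivity) (Real.rpow_nonneg hz.le _),
      Real.mul_rpow hd.le (by positivity), Real.mul_rpow ha.le (by positivity),
      Real.div_rpow h2n1.le (by positivity), Real.div_rpow h2n1.le hn0.le,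
      Real.mul_rpow (by norm_num : (0:ℝ) ≤ 2) hn1.le,
      ← Real.rpow_mul hz.le, ← Real.rpow_mul hz.le, hC_def, hP_def]
    have hzn : (0:ℝ) < z ^ (n * α) := Real.rpow_pos_of_pos hz _
    have hzm : (0:ℝ) < z ^ (-(n - 1) * β) := Real.rpow_pos_of_pos hz _
    rw [show -(n - 1) * β = (1 - n) * β by ring] at hzm ⊢
    field_simp
    linear_combination (2*n-1) * f3
      - 2 * ((2*n-1)^α) * ((2*n-1)^β) * f1
      - 2 * f2
  -- Claim 2 : Young's inequality
  have key2 : b * z ≤ d / 2 * z ^ n + K * Q := by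
    have hw : 1/n + (n-1)/n = 1 := by field_simp; ring
    have hp₁ : (0:ℝ) ≤ n * d / 2 * z ^ n := by positivity
    have hp₂ : (0:ℝ) ≤ (2/(n*d)) ^ (1/(n-1)) * b ^ (n/(n-1)) := by positivity
    have h := Real.geom_mean_le_arith_mean2_weighted
      (by positivity : (0:ℝ) ≤ 1/n) (by positivity : (0:ℝ) ≤ (n-1)/n) hp₁ hp₂ hw
    have eL : (n * d / 2 * z ^ n) ^ (1/n)
        * ((2/(n*d)) ^ (1/(n-1)) * b ^ (n/(n-1))) ^ ((n-1)/n) = b * z := by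
      rw [Real.mul_rpow (by positivity) (Real.rpow_nonneg hz.le _),
          Real.mul_rpow (by positivity) (by positivity),
          ← Real.rpow_mul hz.le, ← Real.rpow_mul (by positivity : (0:ℝ) ≤ 2/(n*d)),
          ← Real.rpow_mul hb.le,
          show n * (1/n) = 1 by field_simp,
          show 1/(n-1) * ((n-1)/n) = 1/n by field_simp,
          show n/(n-1) * ((n-1)/n) = 1 by field_simp,
          Real.rpow_one, Real.rpow_one]
      have e0 : (n * d / 2) ^ (1/n) * (2/(n*d)) ^ (1/n) = 1 := by
        rw [← Real.mul_rpow (by positivity) (by positivity),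
            show n * d / 2 * (2/(n*d)) = 1 by field_simp, Real.one_rpow]
      calc (n * d / 2) ^ (1/n) * z * ((2/(n*d)) ^ (1/n) * b)
          = ((n * d / 2) ^ (1/n) * (2/(n*d)) ^ (1/n)) * (z * b) := by ring
        _ = b * z := by rw [e0]; ring
    have eR : 1/n * (n * d / 2 * z ^ n) + (n-1)/n * ((2/(n*d)) ^ (1/(n-1)) * b ^ (n/(n-1)))
        = d / 2 * z ^ n + K * Q := by
      have e1 : (2/(n*d)) ^ (1/(n-1)) = (2/n) ^ (1/(n-1)) / d ^ (1/(n-1)) := by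
        rw [show (2:ℝ)/(n*d) = (2/n)/d by ring, Real.div_rpow (by positivity) hd.le]
      rw [e1, hK_def, hQ_def]
      field_simp
    rw [eL, eR] at h
    exact h
  -- Claim 3 : K < C
  have key3 : K < C := by
    have h31 : (2/n) ^ (1/(n-1)) ≤ 1 :=
      Real.rpow_le_one (by positivity) (by rw [div_le_one hn0]; linarith) (by positivity)
    have h32 : K ≤ (n-1)/n := by
      rw [hK_def]
      calc (n-1)/n * (2/n) ^ (1/(n-1)) ≤ (n-1)/n * 1 := by
            apply mul_le_mul_of_nonneg_left h31 (by positivity)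
        _ = (n-1)/n := mul_one _
    have h33 : (n-1) ^ α ≤ n ^ α := Real.rpow_le_rpow (by linarith) (by linarith) hα.le
    have h34 : n ^ α * n ^ β = n := by rw [← Real.rpow_add hn0, hαβ, Real.rpow_one]
    have h35 : 2 * (n-1) ^ α * n ^ β ≤ 2 * n := by
      have h := mul_le_mul_of_nonneg_right h33 hT.le
      rw [h34] at h
      linarith
    have h36 : (2*n-1)/(2*n) ≤ C := by
      rw [hC_def, div_le_div_iff₀ (by linarith) hden]
      exact mul_le_mul_of_nonneg_left h35 h2n1.le
    have h37 : (n-1)/n < (2*n-1)/(2*n) := by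
      rw [div_lt_div_iff₀ hn0 (by linarith)]; nlinarith
    linarith
  -- Claim 4
  have key4 : (1:ℝ) < 2 ^ β :=
    (Real.one_lt_rpow_iff_of_pos two_pos).mpr (Or.inl ⟨one_lt_two, hβ⟩)
  -- final assembly
  have expand : d * z ^ n - b * z + a * z ^ (-(n-1))
      = (d/2*z^n + a*z^(-(n-1))) + (d/2*z^n - b*z) := by ring
  rw [gt_iff_lt, expand]
  nlinarith [key1, key2, mul_pos (mul_pos (sub_pos.2 key4) hC) hP,
    mul_pos (sub_pos.2 key3) hQ]
end

section
/- Let N ≥ 3 be an integer, let 𝔞, 𝔡 > 0 and 𝔟, 𝔠, 𝔥 ∈ ℝ. Suppose 𝔟 ≠ 0 and (𝔥 − 𝔠) 𝔡^{(N+1)/(2N−1)} 𝔞^{(N−2)/(2N−1)} / 𝔟² < − (N+1)^{(N+1)/(2N−1)} (N−2)^{(N−2)/(2N−1)} / (4 (2N−1)). Then there is no z > 0 with 𝔥 − 𝔠 ≥ 𝔡 z^N − 𝔟 z + 𝔞 z^{-(N-1)}. -/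
open Real

theorem stmt_16 (N : ℕ) (hN : 3 ≤ N) (a b c d h : ℝ) (ha : 0 < a) (hd : 0 < d)
    (hb : b ≠ 0)
    (hcond : (h - c) * d ^ (((N : ℝ) + 1) / (2 * (N : ℝ) - 1)) *
        a ^ (((N : ℝ) - 2) / (2 * (N : ℝ) - 1)) / b ^ 2 <
      -(((N : ℝ) + 1) ^ (((N : ℝ) + 1) / (2 * (N : ℝ) - 1)) *
          ((N : ℝ) - 2) ^ (((N : ℝ) - 2) / (2 * (N : ℝ) - 1))) /
        (4 * (2 * (N : ℝ) - 1))) :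
    ¬ ∃ z : ℝ, 0 < z ∧
      h - c ≥ d * z ^ (N : ℝ) - b * z + a * z ^ (-((N : ℝ) - 1)) := by
  rintro ⟨z, hz, hineq⟩
  set n : ℝ := (N : ℝ) with hn
  have hn3 : (3:ℝ) ≤ n := by rw [hn]; exact_mod_cast hN
  have h2n : (0:ℝ) < 2 * n - 1 := by linarith
  set α : ℝ := (n + 1) / (2 * n - 1) with hαdef
  set β : ℝ := (n - 2) / (2 * n - 1) with hβdef
  have hα : 0 < α := div_pos (by linarith) h2n
  have hβ : 0 < β := div_pos (by linarith) h2n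
  have hαβ : α + β = 1 := by
    rw [hαdef, hβdef, ← add_div, div_eq_one_iff_eq (ne_of_gt h2n)]; ring
  have hzn : 0 < z ^ n := rpow_pos_of_pos hz n
  have hzm : 0 < z ^ (-(n - 1)) := rpow_pos_of_pos hz _
  set E : ℝ := (d / α) ^ α * (a / β) ^ β with hE
  have hEpos : 0 < E := mul_pos (rpow_pos_of_pos (div_pos hd hα) _)
    (rpow_pos_of_pos (div_pos ha hβ) _)
  clear_value E
  -- Step A: weighted AM-GM
  have amgm := Real.geom_mean_le_arith_mean2_weighted hα.le hβ.le
    (mul_pos (div_pos hd hα) hzn).le (mul_pos (div_pos ha hβ) hzm).le hαβ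
  have hA : E * z ^ (2:ℝ) ≤ d * z ^ n + a * z ^ (-(n - 1)) := by
    have h1 : (d / α * z ^ n) ^ α = (d / α) ^ α * z ^ (n * α) := by
      rw [Real.mul_rpow (div_pos hd hα).le hzn.le, ← Real.rpow_mul hz.le]
    have h2 : (a / β * z ^ (-(n - 1))) ^ β = (a / β) ^ β * z ^ (-(n - 1) * β) := by
      rw [Real.mul_rpow (div_pos ha hβ).le hzm.le, ← Real.rpow_mul hz.le]
    have hexp : n * α + -(n - 1) * β = 2 := by
      rw [hαdef, hβdef, mul_div_assoc', mul_div_assoc', ← add_div, div_eq_iff h2n.ne']; ring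
    have h3 : (d / α * z ^ n) ^ α * (a / β * z ^ (-(n - 1))) ^ β = E * z ^ (2:ℝ) := by
      rw [h1, h2, hE]
      rw [show (d / α) ^ α * z ^ (n * α) * ((a / β) ^ β * z ^ (-(n - 1) * β))
          = (d / α) ^ α * (a / β) ^ β * (z ^ (n * α) * z ^ (-(n - 1) * β)) by ring]
      rw [← Real.rpow_add hz, hexp]
    calc E * z ^ (2:ℝ) = (d / α * z ^ n) ^ α * (a / β * z ^ (-(n - 1))) ^ β := h3.symm
      _ ≤ α * (d / α * z ^ n) + β * (a / β * z ^ (-(n - 1))) := amgm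
      _ = d * z ^ n + a * z ^ (-(n - 1)) := by field_simp
  -- Step B: quadratic bound
  have hz2 : z ^ (2:ℝ) = z * z := by
    rw [show (2:ℝ) = ((2:ℕ):ℝ) by norm_num, Real.rpow_natCast]; ring
  have hB : -(b ^ 2) / (4 * E) ≤ E * z ^ (2:ℝ) - b * z := by
    rw [hz2, div_le_iff₀ (by positivity)]
    nlinarith [sq_nonneg (2 * E * z - b), hEpos]
  -- Step C: compute E
  have hEeq : E = d ^ α * a ^ β * (2 * n - 1) /
      ((n + 1) ^ α * (n - 2) ^ β) := by
    have hdiv1 : (d / α) ^ α = d ^ α / α ^ α := Real.div_rpow hd.le hα.le α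
    have hdiv2 : (a / β) ^ β = a ^ β / β ^ β := Real.div_rpow ha.le hβ.le β
    have hαα : α ^ α = (n + 1) ^ α / (2 * n - 1) ^ α := by
      rw [hαdef]; exact Real.div_rpow (by linarith) h2n.le α
    have hββ : β ^ β = (n - 2) ^ β / (2 * n - 1) ^ β := by
      rw [hβdef]; exact Real.div_rpow (by linarith) h2n.le β
    have hsum : (2 * n - 1) ^ α * (2 * n - 1) ^ β = 2 * n - 1 := by
      rw [← Real.rpow_add h2n, hαβ, Real.rpow_one]
    have p1 : 0 < (n + 1) ^ α := rpow_pos_of_pos (by linarith) _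
    have p2 : 0 < (n - 2) ^ β := rpow_pos_of_pos (by linarith) _
    have p3 : 0 < (2 * n - 1) ^ α := rpow_pos_of_pos h2n _
    have p4 : 0 < (2 * n - 1) ^ β := rpow_pos_of_pos h2n _
    have hmain : (d ^ α / ((n + 1) ^ α / (2 * n - 1) ^ α)) *
        (a ^ β / ((n - 2) ^ β / (2 * n - 1) ^ β)) * ((n + 1) ^ α * (n - 2) ^ β)
        = d ^ α * a ^ β * ((2 * n - 1) ^ α * (2 * n - 1) ^ β) := by
      field_simp
    rw [hE, hdiv1, hdiv2, hαα, hββ, eq_div_iff (mul_pos p1 p2).ne', hmain, hsum]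
  -- Step D: from hcond conclude h - c < -(b^2)/(4*E)
  have hb2 : 0 < b ^ 2 := by positivity
  have hda : 0 < d ^ α * a ^ β :=
    mul_pos (rpow_pos_of_pos hd α) (rpow_pos_of_pos ha β)
  have p1 : 0 < (n + 1) ^ α := rpow_pos_of_pos (by linarith) _
  have p2 : 0 < (n - 2) ^ β := rpow_pos_of_pos (by linarith) _
  have key : -(b ^ 2) / (4 * E)
      = -((n + 1) ^ α * (n - 2) ^ β * b ^ 2) / (4 * (2 * n - 1) * (d ^ α * a ^ β)) := by
    rw [hEeq]; field_simp
  have hD : h - c < -(b ^ 2) / (4 * E) := by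
    rw [div_lt_div_iff₀ hb2 (by positivity)] at hcond
    rw [key, lt_div_iff₀ (by positivity : (0:ℝ) < 4 * (2 * n - 1) * (d ^ α * a ^ β))]
    nlinarith [hcond]
  linarith [hineq, hA, hB, hD]
end
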